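/- Let Θ : D → g and Φ : g → g be k-linear maps. Then the map (X, ξ) ↦ (X, Θ X + Φ ξ) preserves the bracket ⁅(X,ξ),(Y,η)⁆ = (⁅X,Y⁆, ⁅ξ,η⁆ + X·η − Y·ξ), i.e. Θ⁅X,Y⁆ + Φ(⁅ξ,η⁆ + X·η − Y·ξ) = ⁅ΘX + Φξ, ΘY + Φη⁆ + X·(ΘY + Φη) − Y·(ΘX + Φξ) holds for all X, Y ∈ D and ξ, η ∈ g, if and only if the following three conditions hold: (i) Φ⁅ξ,η⁆ = ⁅Φξ, Φη⁆ for all ξ, η ∈ g; (ii) Θ⁅X,Y⁆ = X·(ΘY) − Y·(ΘX) + ⁅ΘX, ΘY⁆ for all X, Y ∈ D; (iii) Φ(X·η) = X·(Φη) + ⁅ΘX, Φη⁆ for all X ∈ D, η ∈ g. (This is the characterization, proved in the paper's Proposition on gauge transformations and due to Mackenzie, of gauge transformations of the trivial transitive Lie algebroid TM × 𝔨 in terms of pairs (θ, Φ) where θ satisfies the Maurer–Cartan equation and dΦ + ad_θ ∘ Φ = 0.) -/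
import Mathlib


open TensorProduct

/-- Mackenzie's characterization of gauge transformations of the trivial
transitive Lie algebroid `TM × 𝔨`, algebraic model: for `k`-linear maps
`Θ : D → g` and `Φ : g → g` (where `D = Der_k(R)`, `g = R ⊗[k] 𝔨`, and `X` acts on `g`
by `X ⊗ id`), the map `(X, ξ) ↦ (X, Θ X + Φ ξ)` preserves the bracket
`⁅(X,ξ),(Y,η)⁆ = (⁅X,Y⁆, ⁅ξ,η⁆ + X·η - Y·ξ)` if and only if
(i) `Φ⁅ξ,η⁆ = ⁅Φξ, Φη⁆`, (ii) `Θ⁅X,Y⁆ = X·(ΘY) - Y·(ΘX) + ⁅ΘX, ΘY⁆`, and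
(iii) `Φ(X·η) = X·(Φη) + ⁅ΘX, Φη⁆`. -/
theorem gauge_transformation_characterization
    {k R 𝔨 : Type*} [CommRing k] [CommRing R] [Algebra k R]
    [LieRing 𝔨] [LieAlgebra k 𝔨]
    (Θ : Derivation k R R →ₗ[k] (R ⊗[k] 𝔨)) (Φ : (R ⊗[k] 𝔨) →ₗ[k] (R ⊗[k] 𝔨)) :
    (∀ (X Y : Derivation k R R) (ξ η : R ⊗[k] 𝔨),
        Θ ⁅X, Y⁆ + Φ (⁅ξ, η⁆ + LinearMap.rTensor 𝔨 X.toLinearMap η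
            - LinearMap.rTensor 𝔨 Y.toLinearMap ξ) =
          ⁅Θ X + Φ ξ, Θ Y + Φ η⁆
            + LinearMap.rTensor 𝔨 X.toLinearMap (Θ Y + Φ η)
            - LinearMap.rTensor 𝔨 Y.toLinearMap (Θ X + Φ ξ)) ↔
      ((∀ ξ η : R ⊗[k] 𝔨, Φ ⁅ξ, η⁆ = ⁅Φ ξ, Φ η⁆) ∧
       (∀ X Y : Derivation k R R,
          Θ ⁅X, Y⁆ = LinearMap.rTensor 𝔨 X.toLinearMap (Θ Y)
            - LinearMap.rTensor 𝔨 Y.toLinearMap (Θ X) + ⁅Θ X, Θ Y⁆) ∧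
       (∀ (X : Derivation k R R) (η : R ⊗[k] 𝔨),
          Φ (LinearMap.rTensor 𝔨 X.toLinearMap η) =
            LinearMap.rTensor 𝔨 X.toLinearMap (Φ η) + ⁅Θ X, Φ η⁆)) := by
  constructor
  · intro h
    refine ⟨?_, ?_, ?_⟩
    · intro ξ η
      have := h 0 0 ξ η
      simpa using this
    · intro X Y
      have := h X Y 0 0
      simp at this
      rw [this]; abel
    · intro X η
      have := h X 0 0 η
      simp at this
      rw [this]; abel
  · rintro ⟨h1, h2, h3⟩ X Y ξ η
    simp only [map_add, map_sub, h1, h2, h3, lie_add, add_lie]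
    rw [← lie_skew (Φ ξ) (Θ Y)]
    abel
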